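/- Assume A(x,y) > 0 for all x, y ∈ Ω∪Ω_δ, all quadrature weights ω_{j,i} are positive, 0 < h < δ, and χ_h ∩ Ω ≠ ∅. (i) If v : χ_h → ℝ satisfies (ℒ_h^δ v)(x_i) ≥ 0 for all x_i ∈ χ_h ∩ Ω, then χ_h ∩ Ω_δ ≠ ∅ and max_{x_i ∈ χ_h ∩ Ω} v(x_i) ≤ max_{x_i ∈ χ_h ∩ Ω_δ} v(x_i). (ii) If v satisfies (ℒ_h^δ v)(x_i) ≤ 0 for all x_i ∈ χ_h ∩ Ω, then min_{x_i ∈ χ_h ∩ Ω} v(x_i) ≥ min_{x_i ∈ χ_h ∩ Ω_δ} v(x_i) (discrete maximum/minimum principle). -/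

import Mathlib

open MeasureTheory Metric Set Filter

noncomputable section

/-- Euclidean space ℝ^d. -/
abbrev Eu (d : ℕ) : Type := EuclideanSpace ℝ (Fin d)

/-- The nonlocal boundary collar Ω_δ = {x ∉ Ω : dist(x, ∂Ω) < δ}. -/
def NLcollar (d : ℕ) (Ω : Set (Eu d)) (δ : ℝ) : Set (Eu d) :=
  {x | x ∉ Ω ∧ Metric.infDist x (frontier Ω) < δ}

/-- The extended domain Ω ∪ Ω_δ. -/
def NLdom (d : ℕ) (Ω : Set (Eu d)) (δ : ℝ) : Set (Eu d) := Ω ∪ NLcollar d Ω δ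

/-- The uniform Cartesian grid hℤ^d in ℝ^d. -/
def gridSet (d : ℕ) (h : ℝ) : Set (Eu d) := {x | ∀ i, ∃ k : ℤ, x i = (k : ℝ) * h}

/-- The meshfree grid set χ_h = (hℤ^d) ∩ (Ω ∪ Ω_δ). -/
def chi (d : ℕ) (Ω : Set (Eu d)) (δ h : ℝ) : Set (Eu d) :=
  gridSet d h ∩ NLdom d Ω δ

/-- The singular kernel γ_δ(r) = D₀ / (δ^{d+2-s} r^s) for 0 < r ≤ δ, zero otherwise. -/
def gamK (d : ℕ) (s D₀ δ r : ℝ) : ℝ :=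
  if 0 < r ∧ r ≤ δ then D₀ / (δ ^ ((d : ℝ) + 2 - s) * r ^ s) else 0

/-- The discrete nonlocal diffusion operator ℒ_h^δ. -/
def Lh (d : ℕ) (Ω : Set (Eu d)) (δ h s D₀ : ℝ)
    (A ω : Eu d → Eu d → ℝ) (v : Eu d → ℝ) (xi : Eu d) : ℝ :=
  2 * ∑ᶠ xj ∈ {y | y ∈ chi d Ω δ h ∧ y ∈ ball xi δ ∧ y ≠ xi},
        A xi xj * gamK d s D₀ δ (dist xi xj) * (v xj - v xi) * ω xj xi

/-- The continuum nonlocal diffusion operator ℒ^δ. -/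
def Lc (d : ℕ) (δ s D₀ : ℝ) (A : Eu d → Eu d → ℝ) (u : Eu d → ℝ) (x : Eu d) : ℝ :=
  2 * ∫ y in ball x δ, A x y * gamK d s D₀ δ (dist x y) * (u y - u x)

/-- The third-order polynomial reproducing property of the quadrature weights ω. -/
def Reproduces3 (d : ℕ) (Ω : Set (Eu d)) (δ h s D₀ : ℝ) (ω : Eu d → Eu d → ℝ) : Prop :=
  ∀ p : MvPolynomial (Fin d) ℝ, p.totalDegree ≤ 3 → ∀ xi ∈ chi d Ω δ h ∩ Ω,
    (∑ᶠ xj ∈ {y | y ∈ chi d Ω δ h ∧ y ∈ ball xi δ ∧ y ≠ xi},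
        MvPolynomial.eval (fun i => xj i - xi i) p * gamK d s D₀ δ (dist xj xi) * ω xj xi)
      = ∫ y in ball xi δ, MvPolynomial.eval (fun i => y i - xi i) p * gamK d s D₀ δ (dist y xi)

/-- Positivity of the kernel on (0, δ]. -/
lemma gamK_pos {d : ℕ} {s D₀ δ r : ℝ} (hD₀ : 0 < D₀) (hδ : 0 < δ)
    (h0 : 0 < r) (h1 : r ≤ δ) : 0 < gamK d s D₀ δ r := by
  rw [gamK, if_pos ⟨h0, h1⟩]
  have h2 : (0:ℝ) < δ ^ ((d : ℝ) + 2 - s) := Real.rpow_pos_of_pos hδ _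
  have h3 : (0:ℝ) < r ^ s := Real.rpow_pos_of_pos h0 _
  positivity

/-- The segment between an interior point and an exterior point crosses the frontier. -/
lemma exists_frontier_between {d : ℕ} {Ω : Set (Eu d)} (hΩopen : IsOpen Ω) {x y : Eu d}
    (hx : x ∈ Ω) (hy : y ∉ Ω) : ∃ z ∈ frontier Ω, dist y z ≤ dist x y := by
  have hfr : frontier Ω = closure Ω \ Ω := hΩopen.frontier_eq
  have hseg : (segment ℝ x y ∩ frontier Ω).Nonempty := by
    by_contra hcon
    rw [Set.not_nonempty_iff_eq_empty] at hcon
    have hnm : ∀ z, z ∈ segment ℝ x y → z ∉ frontier Ω := by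
      intro z hz hf
      exact (Set.eq_empty_iff_forall_notMem.1 hcon z) ⟨hz, hf⟩
    have hsub : segment ℝ x y ⊆ Ω ∪ (closure Ω)ᶜ := by
      intro z hz
      by_cases hzΩ : z ∈ Ω
      · exact Or.inl hzΩ
      · exact Or.inr fun hcl => hnm z hz (hfr ▸ ⟨hcl, hzΩ⟩)
    have hyc : y ∉ closure Ω := fun hcl =>
      hnm y (right_mem_segment ℝ x y) (hfr ▸ ⟨hcl, hy⟩)
    obtain ⟨z, hzs, hzΩ, hzc⟩ :=
      (convex_segment x y).isPreconnected _ _ hΩopen isClosed_closure.isOpen_compl hsub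
        ⟨x, left_mem_segment ℝ x y, hx⟩ ⟨y, right_mem_segment ℝ x y, hyc⟩
    exact hzc (subset_closure hzΩ)
  obtain ⟨z, hzs, hzf⟩ := hseg
  refine ⟨z, hzf, ?_⟩
  obtain ⟨a, b, ha, hb, hab, rfl⟩ := hzs
  have hb1 : b = 1 - a := by linarith
  subst hb1
  have hseq : y - (a • x + (1 - a) • y) = a • (y - x) := by module
  have ha1 : a ≤ 1 := by linarith
  rw [dist_eq_norm, hseq, norm_smul, Real.norm_eq_abs, abs_of_nonneg ha, dist_comm,
    dist_eq_norm']
  calc a * ‖y - x‖ = a * ‖x - y‖ := by rw [norm_sub_rev]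
    _ ≤ 1 * ‖x - y‖ := by
        have := norm_nonneg (x - y); nlinarith
    _ = ‖x - y‖ := one_mul _

/-- Adding h in one coordinate preserves the grid. -/
lemma grid_add_single {d : ℕ} {h : ℝ} {x : Eu d} (hx : x ∈ gridSet d h) (i0 : Fin d) :
    x + EuclideanSpace.single i0 h ∈ gridSet d h := by
  intro i
  obtain ⟨k, hk⟩ := hx i
  refine ⟨if i = i0 then k + 1 else k, ?_⟩
  have hadd : (x + EuclideanSpace.single i0 h) i = x i + EuclideanSpace.single i0 h i := rfl
  rw [hadd, hk, EuclideanSpace.single_apply]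
  split <;> push_cast <;> ring

/-- The operator `Lh` is odd in `v`. -/
lemma Lh_neg {d : ℕ} {Ω : Set (Eu d)} {δ h s D₀ : ℝ} (hfin : (chi d Ω δ h).Finite)
    (A ω : Eu d → Eu d → ℝ) (v : Eu d → ℝ) (xi : Eu d) :
    Lh d Ω δ h s D₀ A ω (fun x => -v x) xi = -Lh d Ω δ h s D₀ A ω v xi := by
  have hS : {y | y ∈ chi d Ω δ h ∧ y ∈ ball xi δ ∧ y ≠ xi}.Finite :=
    hfin.subset fun z hz => hz.1
  simp only [Lh]
  rw [finsum_mem_eq_finite_toFinset_sum _ hS, finsum_mem_eq_finite_toFinset_sum _ hS]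
  rw [show (∑ xj ∈ hS.toFinset,
      A xi xj * gamK d s D₀ δ (dist xi xj) * (-v xj - -v xi) * ω xj xi)
      = ∑ xj ∈ hS.toFinset,
      -(A xi xj * gamK d s D₀ δ (dist xi xj) * (v xj - v xi) * ω xj xi) from
    Finset.sum_congr rfl fun z _ => by ring]
  rw [Finset.sum_neg_distrib]
  ring

/-- If `xi` is a global maximizer on the grid with `Lh v xi ≥ 0`, every neighbor
has the same value. -/
lemma neighbor_val_eq {d : ℕ} {Ω : Set (Eu d)} {δ h s D₀ : ℝ} (hδ : 0 < δ) (hD₀ : 0 < D₀)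
    (hfin : (chi d Ω δ h).Finite) (A ω : Eu d → Eu d → ℝ)
    (hApos : ∀ x ∈ NLdom d Ω δ, ∀ y ∈ NLdom d Ω δ, 0 < A x y)
    (hωpos : ∀ x ∈ chi d Ω δ h, ∀ y ∈ chi d Ω δ h, 0 < ω x y)
    (v : Eu d → ℝ) (xi : Eu d) (hxi : xi ∈ chi d Ω δ h)
    (hmax : ∀ y ∈ chi d Ω δ h, v y ≤ v xi)
    (hL : 0 ≤ Lh d Ω δ h s D₀ A ω v xi)
    (y : Eu d) (hy : y ∈ chi d Ω δ h) (hyb : y ∈ ball xi δ) (hyne : y ≠ xi) :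
    v y = v xi := by
  have hS : {z | z ∈ chi d Ω δ h ∧ z ∈ ball xi δ ∧ z ≠ xi}.Finite :=
    hfin.subset fun z hz => hz.1
  have hterm : ∀ z ∈ hS.toFinset,
      A xi z * gamK d s D₀ δ (dist xi z) * (v z - v xi) * ω z xi ≤ 0 := by
    intro z hz
    rw [Set.Finite.mem_toFinset] at hz
    have hA : 0 < A xi z := hApos xi hxi.2 z hz.1.2
    have hγ : 0 < gamK d s D₀ δ (dist xi z) := by
      refine gamK_pos hD₀ hδ (dist_pos.2 hz.2.2.symm) ?_
      rw [dist_comm]; exact le_of_lt (mem_ball.1 hz.2.1)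
    have hω : 0 < ω z xi := hωpos z hz.1 xi hxi
    have hv : v z - v xi ≤ 0 := sub_nonpos.2 (hmax z hz.1)
    have hre : A xi z * gamK d s D₀ δ (dist xi z) * (v z - v xi) * ω z xi
        = (A xi z * gamK d s D₀ δ (dist xi z) * ω z xi) * (v z - v xi) := by ring
    rw [hre]
    exact mul_nonpos_iff.2 (Or.inl ⟨by positivity, hv⟩)
  rw [Lh, finsum_mem_eq_finite_toFinset_sum _ hS] at hL
  have hsle : ∑ z ∈ hS.toFinset,
      A xi z * gamK d s D₀ δ (dist xi z) * (v z - v xi) * ω z xi ≤ 0 :=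
    Finset.sum_nonpos hterm
  have hseq : ∑ z ∈ hS.toFinset,
      A xi z * gamK d s D₀ δ (dist xi z) * (v z - v xi) * ω z xi = 0 :=
    le_antisymm hsle (by linarith)
  have hy0 := (Finset.sum_eq_zero_iff_of_nonpos hterm).1 hseq y
    (hS.mem_toFinset.2 ⟨hy, hyb, hyne⟩)
  have hA : 0 < A xi y := hApos xi hxi.2 y hy.2
  have hγ : 0 < gamK d s D₀ δ (dist xi y) := by
    refine gamK_pos hD₀ hδ (dist_pos.2 hyne.symm) ?_
    rw [dist_comm]; exact le_of_lt (mem_ball.1 hyb)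
  have hω : 0 < ω y xi := hωpos y hy xi hxi
  have hre : (A xi y * gamK d s D₀ δ (dist xi y) * ω y xi) * (v y - v xi) = 0 := by
    linear_combination hy0
  rcases mul_eq_zero.1 hre with hc | hc
  · exact absurd hc (ne_of_gt (by positivity))
  · linarith [sub_eq_zero.1 hc]

/-- Main auxiliary lemma: a subsolution attains its grid maximum on the collar. -/
lemma max_aux {d : ℕ} (hd : 1 ≤ d) {Ω : Set (Eu d)}
    (hΩopen : IsOpen Ω) (hΩbdd : Bornology.IsBounded Ω)
    {δ : ℝ} (hδ : 0 < δ) {h : ℝ} (hh : 0 < h) (hhδ : h < δ)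
    {s D₀ : ℝ} (hD₀ : 0 < D₀)
    (hfin : (chi d Ω δ h).Finite)
    (A ω : Eu d → Eu d → ℝ)
    (hApos : ∀ x ∈ NLdom d Ω δ, ∀ y ∈ NLdom d Ω δ, 0 < A x y)
    (hωpos : ∀ x ∈ chi d Ω δ h, ∀ y ∈ chi d Ω δ h, 0 < ω x y)
    (hne : (chi d Ω δ h ∩ Ω).Nonempty)
    (v : Eu d → ℝ)
    (hv : ∀ xi ∈ chi d Ω δ h ∩ Ω, 0 ≤ Lh d Ω δ h s D₀ A ω v xi) :
    ∃ x' ∈ chi d Ω δ h ∩ NLcollar d Ω δ, ∀ y ∈ chi d Ω δ h, v y ≤ v x' := by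
  classical
  obtain ⟨x0, hx0⟩ := hne
  have hχne : hfin.toFinset.Nonempty := ⟨x0, hfin.mem_toFinset.2 hx0.1⟩
  obtain ⟨xs, hxs, hxsmax⟩ := hfin.toFinset.exists_max_image v hχne
  rw [Set.Finite.mem_toFinset] at hxs
  have hmax : ∀ y ∈ chi d Ω δ h, v y ≤ v xs := fun y hy =>
    hxsmax y (hfin.mem_toFinset.2 hy)
  rcases hxs.2 with hxsΩ | hxscol
  swap
  · exact ⟨xs, ⟨hxs, hxscol⟩, hmax⟩
  · -- xs ∈ Ω : walk along the grid until we escape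
    set i0 : Fin d := ⟨0, hd⟩
    set e : Eu d := EuclideanSpace.single i0 h with he
    have henorm : ‖e‖ = h := by rw [he, EuclideanSpace.norm_single, Real.norm_eq_abs,
      abs_of_pos hh]
    have hene : e ≠ 0 := by
      intro h0; rw [h0, norm_zero] at henorm; exact hh.ne henorm
    set g : ℕ → Eu d := fun k => xs + (k : ℕ) • e with hg
    have hg0 : g 0 = xs := by simp [hg]
    have hgsucc : ∀ k, g (k + 1) = g k + e := by
      intro k; simp only [hg, succ_nsmul, add_assoc]
    have hgdist : ∀ k, dist (g k) xs = (k : ℝ) * h := by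
      intro k
      rw [hg]
      simp only
      rw [dist_eq_norm, add_sub_cancel_left, ← Nat.cast_smul_eq_nsmul ℝ, norm_smul,
        Real.norm_eq_abs, Nat.abs_cast, henorm]
    obtain ⟨r, hr⟩ := hΩbdd.subset_ball xs
    have hesc : ∃ k, g k ∉ Ω := by
      refine ⟨⌈r / h⌉₊ + 1, fun hmem => ?_⟩
      have h1 : dist (g (⌈r / h⌉₊ + 1)) xs < r := mem_ball.1 (hr hmem)
      rw [hgdist] at h1
      have h2 : r / h ≤ (⌈r / h⌉₊ : ℝ) := Nat.le_ceil _
      have h3 : r ≤ (⌈r / h⌉₊ : ℝ) * h := by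
        rw [div_le_iff₀ hh] at h2; linarith
      push_cast at h1
      nlinarith
    set N := Nat.find hesc with hN
    have hNspec : g N ∉ Ω := Nat.find_spec hesc
    have hNmin : ∀ k, k < N → g k ∈ Ω := fun k hk => not_not.1 (Nat.find_min hesc hk)
    have key : ∀ k, k ≤ N → g k ∈ chi d Ω δ h ∧ v (g k) = v xs := by
      intro k
      induction k with
      | zero => intro _; rw [hg0]; exact ⟨hxs, rfl⟩
      | succ n ih =>
        intro hn
        have hnN : n < N := hn
        obtain ⟨hgc, hgv⟩ := ih (le_of_lt hnN)
        have hgΩ : g n ∈ Ω := hNmin n hnN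
        have hgrid : g (n + 1) ∈ gridSet d h := by
          rw [hgsucc, he]; exact grid_add_single hgc.1 i0
        have hdist : dist (g (n + 1)) (g n) = h := by
          rw [hgsucc, dist_self_add_left, henorm]
        have hne2 : g (n + 1) ≠ g n := by
          rw [hgsucc]; intro hcon; exact hene (add_eq_left.1 hcon)
        have hdom : g (n + 1) ∈ NLdom d Ω δ := by
          by_cases hc : g (n + 1) ∈ Ω
          · exact Or.inl hc
          · refine Or.inr ⟨hc, ?_⟩
            obtain ⟨z, hz, hzd⟩ := exists_frontier_between hΩopen hgΩ hc
            calc Metric.infDist (g (n + 1)) (frontier Ω) ≤ dist (g (n + 1)) z :=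
                  infDist_le_dist_of_mem hz
              _ ≤ dist (g n) (g (n + 1)) := hzd
              _ = h := by rw [dist_comm]; exact hdist
              _ < δ := hhδ
        have hchi : g (n + 1) ∈ chi d Ω δ h := ⟨hgrid, hdom⟩
        have hmax' : ∀ y ∈ chi d Ω δ h, v y ≤ v (g n) := by
          intro y hy; rw [hgv]; exact hmax y hy
        have hball : g (n + 1) ∈ ball (g n) δ := by
          rw [mem_ball, hdist]; exact hhδ
        have hvv := neighbor_val_eq hδ hD₀ hfin A ω hApos hωpos v (g n) hgc hmax'
          (hv (g n) ⟨hgc, hgΩ⟩) (g (n + 1)) hchi hball hne2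
        exact ⟨hchi, hvv.trans hgv⟩
    obtain ⟨hchiN, hvN⟩ := key N le_rfl
    have hcol : g N ∈ NLcollar d Ω δ := hchiN.2.resolve_left hNspec
    exact ⟨g N, ⟨hchiN, hcol⟩, fun y hy => hvN ▸ hmax y hy⟩

/-- Discrete maximum/minimum principle for the discrete nonlocal operator ℒ_h^δ with
positive coefficient and positive quadrature weights: (i) if ℒ_h^δ v ≥ 0 on χ_h ∩ Ω
then χ_h ∩ Ω_δ ≠ ∅ and max_{χ_h∩Ω} v ≤ max_{χ_h∩Ω_δ} v; (ii) if ℒ_h^δ v ≤ 0 on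
χ_h ∩ Ω then min_{χ_h∩Ω} v ≥ min_{χ_h∩Ω_δ} v. -/
theorem discrete_max_min_principle
    (d : ℕ) (hd : 1 ≤ d) (Ω : Set (Eu d))
    (hΩopen : IsOpen Ω) (hΩbdd : Bornology.IsBounded Ω) (hΩconn : IsConnected Ω)
    (δ : ℝ) (hδ : 0 < δ) (h : ℝ) (hh : 0 < h) (hhδ : h < δ)
    (s : ℝ) (hs0 : 0 ≤ s) (hsd : s < (d : ℝ))
    (D₀ : ℝ) (hD₀ : 0 < D₀)
    (hnorm : (∫ z in ball (0 : Eu d) δ, gamK d s D₀ δ ‖z‖ * ‖z‖ ^ 2) = (d : ℝ))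
    (hfin : (chi d Ω δ h).Finite)
    (A ω : Eu d → Eu d → ℝ)
    (hApos : ∀ x ∈ NLdom d Ω δ, ∀ y ∈ NLdom d Ω δ, 0 < A x y)
    (hωpos : ∀ x ∈ chi d Ω δ h, ∀ y ∈ chi d Ω δ h, 0 < ω x y)
    (hne : (chi d Ω δ h ∩ Ω).Nonempty)
    (v : Eu d → ℝ) :
    ((∀ xi ∈ chi d Ω δ h ∩ Ω, 0 ≤ Lh d Ω δ h s D₀ A ω v xi) →
      (chi d Ω δ h ∩ NLcollar d Ω δ).Nonempty ∧
      sSup (v '' (chi d Ω δ h ∩ Ω)) ≤ sSup (v '' (chi d Ω δ h ∩ NLcollar d Ω δ))) ∧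
    ((∀ xi ∈ chi d Ω δ h ∩ Ω, Lh d Ω δ h s D₀ A ω v xi ≤ 0) →
      (chi d Ω δ h ∩ NLcollar d Ω δ).Nonempty ∧
      sInf (v '' (chi d Ω δ h ∩ NLcollar d Ω δ)) ≤ sInf (v '' (chi d Ω δ h ∩ Ω))) := by
  constructor
  · intro hv
    obtain ⟨x', hx', hmax⟩ := max_aux hd hΩopen hΩbdd hδ hh hhδ hD₀ hfin A ω hApos hωpos
      hne v hv
    refine ⟨⟨x', hx'⟩, ?_⟩
    have hbdd : BddAbove (v '' (chi d Ω δ h ∩ NLcollar d Ω δ)) :=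
      ((hfin.subset Set.inter_subset_left).image v).bddAbove
    have h1 : sSup (v '' (chi d Ω δ h ∩ Ω)) ≤ v x' := by
      refine csSup_le (hne.image v) ?_
      rintro b ⟨y, hy, rfl⟩
      exact hmax y hy.1
    have h2 : v x' ≤ sSup (v '' (chi d Ω δ h ∩ NLcollar d Ω δ)) :=
      le_csSup hbdd ⟨x', hx', rfl⟩
    linarith
  · intro hv
    have hv' : ∀ xi ∈ chi d Ω δ h ∩ Ω, 0 ≤ Lh d Ω δ h s D₀ A ω (fun x => -v x) xi := by
      intro xi hxi
      rw [Lh_neg hfin]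
      linarith [hv xi hxi]
    obtain ⟨x', hx', hmax⟩ := max_aux hd hΩopen hΩbdd hδ hh hhδ hD₀ hfin A ω hApos hωpos
      hne (fun x => -v x) hv'
    refine ⟨⟨x', hx'⟩, ?_⟩
    have hbdd : BddBelow (v '' (chi d Ω δ h ∩ NLcollar d Ω δ)) :=
      ((hfin.subset Set.inter_subset_left).image v).bddBelow
    have h1 : sInf (v '' (chi d Ω δ h ∩ NLcollar d Ω δ)) ≤ v x' :=
      csInf_le hbdd ⟨x', hx', rfl⟩
    refine le_csInf (hne.image v) ?_
    rintro b ⟨y, hy, rfl⟩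
    have h2 : -v y ≤ -v x' := hmax y hy.1
    linarith
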